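/- Let q > 2 be odd. For every n ≥ 1 and nonnegative integer m with mq < n+1 ≤ (m+1)q, the sequence g satisfies g(n+1) = g(n) + g(m+1), where g(n) = f_{2,q}(qn−1) for n ≥ 1 and g(0) = 0. -/

import Mathlib

open Filter Real

/-- Number of representations of `n` as a sum of distinct terms of the form `p^a * q^b`. -/
noncomputable def fpq (p q n : ℕ) : ℕ :=
  Set.ncard {S : Finset ℕ | (∀ k ∈ S, ∃ a b : ℕ, k = p ^ a * q ^ b) ∧ S.sum id = n}

open Finset
open scoped Classical

/-- binary representation as a finset of powers of two -/
noncomputable def bin (n : ℕ) : Finset ℕ := (n.bitIndices.toFinset).image (2 ^ ·)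

lemma two_pow_inj : Function.Injective (fun i : ℕ => 2 ^ i) :=
  Nat.pow_right_injective (le_refl 2)

lemma bin_sum (n : ℕ) : (bin n).sum id = n := by
  rw [bin, Finset.sum_image (fun a _ b _ h => two_pow_inj h)]
  simpa using Nat.twoPowSum_toFinset_bitIndices n

lemma bin_pow2 {n k : ℕ} (hk : k ∈ bin n) : ∃ a, k = 2 ^ a := by
  simp only [bin, Finset.mem_image] at hk
  obtain ⟨a, _, rfl⟩ := hk
  exact ⟨a, rfl⟩

/-- uniqueness of binary representation -/
lemma pow2_finset_eq (A B : Finset ℕ) (hA : ∀ k ∈ A, ∃ a, k = 2 ^ a)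
    (hB : ∀ k ∈ B, ∃ a, k = 2 ^ a) (h : A.sum id = B.sum id) : A = B := by
  have key : ∀ C : Finset ℕ, (∀ k ∈ C, ∃ a, k = 2 ^ a) →
      C = (C.image (Nat.log 2)).image (2 ^ ·) ∧ C.sum id = ∑ i ∈ C.image (Nat.log 2), 2 ^ i := by
    intro C hC
    have hfix : ∀ k ∈ C, 2 ^ Nat.log 2 k = k := by
      intro k hk; obtain ⟨a, rfl⟩ := hC k hk; rw [Nat.log_pow one_lt_two]
    have h1 : (C.image (Nat.log 2)).image (2 ^ ·) = C := by
      rw [Finset.image_image]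
      calc C.image ((2 ^ ·) ∘ Nat.log 2) = C.image id := Finset.image_congr (fun k hk => hfix k hk)
      _ = C := Finset.image_id
    refine ⟨h1.symm, ?_⟩
    conv_lhs => rw [← h1]
    rw [Finset.sum_image (fun a _ b _ h => two_pow_inj h)]
    simp
  obtain ⟨hA1, hA2⟩ := key A hA
  obtain ⟨hB1, hB2⟩ := key B hB
  rw [hA1, hB1]
  congr 1
  apply Finset.geomSum_injective (le_refl 2)
  show (∑ i ∈ A.image (Nat.log 2), 2 ^ i) = ∑ i ∈ B.image (Nat.log 2), 2 ^ i
  rw [← hA2, ← hB2, h]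

section Main

variable (q : ℕ)

/-- the representations of `n` as a concrete finset -/
noncomputable def FF (n : ℕ) : Finset (Finset ℕ) :=
  (Finset.range (n+1)).powerset.filter
    (fun S => (∀ k ∈ S, ∃ a b : ℕ, k = 2 ^ a * q ^ b) ∧ S.sum id = n)

lemma mem_FF_iff {n : ℕ} {S : Finset ℕ} :
    S ∈ FF q n ↔ (∀ k ∈ S, ∃ a b : ℕ, k = 2 ^ a * q ^ b) ∧ S.sum id = n := by
  constructor
  · intro h; exact (Finset.mem_filter.1 h).2
  · intro h
    refine Finset.mem_filter.2 ⟨Finset.mem_powerset.2 (fun k hk => ?_), h⟩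
    rw [Finset.mem_range, Nat.lt_succ_iff, ← h.2]
    exact Finset.single_le_sum (f := id) (fun i _ => Nat.zero_le _) hk

lemma fpq_eq_FF (n : ℕ) : fpq 2 q n = (FF q n).card := by
  have : {S : Finset ℕ | (∀ k ∈ S, ∃ a b : ℕ, k = 2 ^ a * q ^ b) ∧ S.sum id = n}
      = ↑(FF q n) := by
    ext S; simp [mem_FF_iff]
  rw [fpq, this, Set.ncard_coe_finset]

variable (hq : 2 < q) (hodd : Odd q)
include hq hodd

lemma not_dvd_two_pow (a : ℕ) : ¬ q ∣ 2 ^ a := by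
  intro h
  have hco : Nat.Coprime q 2 := Nat.coprime_two_right.2 hodd
  have h1 : q = 1 := Nat.Coprime.eq_one_of_dvd (hco.pow_right a) h
  omega

omit hodd in
lemma sum_qmul_image (T : Finset ℕ) : (T.image (fun t => q * t)).sum id = q * T.sum id := by
  have hq0 : 0 < q := by omega
  rw [Finset.sum_image (fun a _ b _ h => Nat.eq_of_mul_eq_mul_left hq0 h)]
  simp [Finset.mul_sum]

lemma filter_bin_union (c : ℕ) (T : Finset ℕ) :
    (bin c ∪ T.image (fun t => q * t)).filter (q ∣ ·) = T.image (fun t => q * t) := by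
  rw [Finset.filter_union, Finset.filter_false_of_mem, Finset.filter_true_of_mem, Finset.empty_union]
  · intro k hk
    simp only [Finset.mem_image] at hk
    obtain ⟨t, _, rfl⟩ := hk
    exact Dvd.intro t rfl
  · intro k hk hdvd
    obtain ⟨a, rfl⟩ := bin_pow2 hk
    exact not_dvd_two_pow q hq hodd a hdvd

lemma FF_rec (N : ℕ) :
    (FF q N).card = ∑ j ∈ Finset.range (N / q + 1), (FF q j).card := by
  have hq0 : 0 < q := by omega
  have key : FF q N = (Finset.range (N / q + 1)).biUnion
      (fun j => (FF q j).image (fun T => bin (N - q * j) ∪ T.image (fun t => q * t))) := by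
    ext S
    simp only [Finset.mem_biUnion, Finset.mem_image, Finset.mem_range, mem_FF_iff]
    constructor
    · rintro ⟨hform, hsum⟩
      set B := S.filter (q ∣ ·) with hBdef
      set A := S.filter (fun k => ¬ q ∣ k) with hAdef
      set T := B.image (· / q) with hTdef
      set j := T.sum id with hjdef
      have hBT : B = T.image (fun t => q * t) := by
        ext k
        simp only [hTdef, Finset.mem_image, exists_exists_and_eq_and]
        constructor
        · intro hk
          exact ⟨k, hk, Nat.mul_div_cancel' (Finset.mem_filter.1 hk).2⟩
        · rintro ⟨k', hk', rfl⟩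
          rwa [Nat.mul_div_cancel' (Finset.mem_filter.1 hk').2]
      have hBsum : B.sum id = q * j := by rw [hBT, sum_qmul_image q hq]
      have hABu : A ∪ B = S := by
        ext k
        simp only [hAdef, hBdef, Finset.mem_union, Finset.mem_filter]
        tauto
      have hABsum : A.sum id + B.sum id = N := by
        rw [← hsum, ← Finset.sum_union (Finset.disjoint_filter_filter_not S S _).symm, hABu]
      have hqjN : q * j ≤ N := by
        rw [← hBsum]; omega
      have hApow : ∀ k ∈ A, ∃ a, k = 2 ^ a := by
        intro k hk
        have hknd : ¬ q ∣ k := (Finset.mem_filter.1 hk).2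
        obtain ⟨a, b, rfl⟩ := hform k (Finset.mem_filter.1 hk).1
        cases b with
        | zero => exact ⟨a, by ring⟩
        | succ b => exact absurd ⟨2 ^ a * q ^ b, by ring⟩ hknd
      have hA : A = bin (N - q * j) := by
        apply pow2_finset_eq _ _ hApow (fun k hk => bin_pow2 hk)
        rw [bin_sum]; omega
      refine ⟨j, ?_, T, ⟨?_, rfl⟩, ?_⟩
      · rw [Nat.lt_succ_iff, Nat.le_div_iff_mul_le hq0, Nat.mul_comm]; exact hqjN
      · rintro k hk
        simp only [hTdef, Finset.mem_image] at hk
        obtain ⟨k', hk', rfl⟩ := hk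
        have hdvd : q ∣ k' := (Finset.mem_filter.1 hk').2
        obtain ⟨a, b, rfl⟩ := hform k' (Finset.mem_filter.1 hk').1
        cases b with
        | zero => exact absurd (by simpa using hdvd) (not_dvd_two_pow q hq hodd a)
        | succ b =>
          refine ⟨a, b, ?_⟩
          rw [pow_succ, ← Nat.mul_assoc, Nat.mul_div_cancel _ hq0]
      · rw [← hA, ← hBT, hABu]
    · rintro ⟨j, hj, T, ⟨hTform, hTsum⟩, rfl⟩
      have hqjN : q * j ≤ N := by
        rw [Nat.lt_succ_iff, Nat.le_div_iff_mul_le hq0] at hj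
        rw [Nat.mul_comm]; exact hj
      have hdisj : Disjoint (bin (N - q * j)) (T.image (fun t => q * t)) := by
        rw [Finset.disjoint_left]
        intro k hk hk2
        obtain ⟨a, rfl⟩ := bin_pow2 hk
        simp only [Finset.mem_image] at hk2
        obtain ⟨t, _, ht⟩ := hk2
        exact not_dvd_two_pow q hq hodd a ⟨t, ht.symm⟩
      constructor
      · intro k hk
        rcases Finset.mem_union.1 hk with hk | hk
        · obtain ⟨a, rfl⟩ := bin_pow2 hk
          exact ⟨a, 0, by ring⟩
        · simp only [Finset.mem_image] at hk
          obtain ⟨t, ht, rfl⟩ := hk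
          obtain ⟨a, b, rfl⟩ := hTform t ht
          exact ⟨a, b + 1, by ring⟩
      · rw [Finset.sum_union hdisj, bin_sum, sum_qmul_image q hq, hTsum]
        omega
  rw [key, Finset.card_biUnion]
  · apply Finset.sum_congr rfl
    intro j _
    apply Finset.card_image_of_injOn
    intro T hT T' hT' hEq
    beta_reduce at hEq
    have h1 := filter_bin_union q hq hodd (N - q * j) T
    have h2 := filter_bin_union q hq hodd (N - q * j) T'
    rw [hEq] at h1
    rw [h2] at h1
    exact Finset.image_injective (f := fun t => q * t) (fun a b h => Nat.eq_of_mul_eq_mul_left hq0 h) h1.symm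
  · intro j _ j' _ hjj'
    rw [Function.onFun, Finset.disjoint_left]
    rintro U hU hU'
    simp only [Finset.mem_image] at hU hU'
    obtain ⟨T, hT, rfl⟩ := hU
    obtain ⟨T', hT', hEq⟩ := hU'
    apply hjj'
    have h1 := filter_bin_union q hq hodd (N - q * j) T
    have h2 := filter_bin_union q hq hodd (N - q * j') T'
    rw [hEq] at h2
    rw [h2] at h1
    have hs : (T.image (fun t => q * t)).sum id = (T'.image (fun t => q * t)).sum id := by rw [h1]
    rw [sum_qmul_image q hq, sum_qmul_image q hq, (mem_FF_iff q).1 hT |>.2, (mem_FF_iff q).1 hT' |>.2] at hs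
    exact Nat.eq_of_mul_eq_mul_left hq0 hs

end Main

lemma auxdiv (q t : ℕ) (hq0 : 0 < q) (ht : 1 ≤ t) : (q * t - 1) / q = t - 1 := by
  obtain ⟨s, rfl⟩ : ∃ s, t = s + 1 := ⟨t - 1, by omega⟩
  have e : q * (s + 1) - 1 = q * s + (q - 1) := by rw [Nat.mul_succ]; omega
  rw [e, Nat.mul_add_div hq0, Nat.div_eq_of_lt (by omega)]
  omega

theorem stmt19 (q : ℕ) (hq : 2 < q) (hodd : Odd q) (g : ℕ → ℕ)
    (hg0 : g 0 = 0) (hg : ∀ n : ℕ, 1 ≤ n → g n = fpq 2 q (q * n - 1)) :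
    ∀ n : ℕ, 1 ≤ n → ∀ m : ℕ, m * q < n + 1 → n + 1 ≤ (m + 1) * q →
      g (n + 1) = g n + g (m + 1) := by
  intro n hn m hm1 hm2
  have hq0 : 0 < q := by omega
  have hm2' : n + 1 ≤ m * q + q := by
    have h := hm2; rw [Nat.succ_mul] at h; exact h
  have hnq : n / q = m := by
    apply Nat.div_eq_of_lt_le <;> omega
  have e1 : g (n + 1) = ∑ j ∈ Finset.range (n + 1), (FF q j).card := by
    rw [hg (n + 1) (by omega), fpq_eq_FF, FF_rec q hq hodd, auxdiv q (n + 1) hq0 (by omega)]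
    norm_num
  have e2 : g n = ∑ j ∈ Finset.range n, (FF q j).card := by
    have hr : n - 1 + 1 = n := by omega
    rw [hg n hn, fpq_eq_FF, FF_rec q hq hodd, auxdiv q n hq0 hn, hr]
  have e3 : g (m + 1) = ∑ j ∈ Finset.range (m + 1), (FF q j).card := by
    rw [hg (m + 1) (by omega), fpq_eq_FF, FF_rec q hq hodd, auxdiv q (m + 1) hq0 (by omega)]
    norm_num
  have e4 : (FF q n).card = ∑ j ∈ Finset.range (m + 1), (FF q j).card := by
    rw [FF_rec q hq hodd, hnq]
  rw [e1, e2, e3, Finset.sum_range_succ, e4]
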